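/- Conversely, if S_C(ρ) = S_vN(ρ) for a POVM {Π_i}, then each eigenprojector of ρ is a sum of POVM elements: for each distinct eigenvalue ρ of the density matrix there is an index set I^(ρ) with P_ρ = ∑_{i ∈ I^(ρ)} Π_i, and these index sets partition the full index set. -/

import Mathlib

open scoped Matrix ComplexOrder

/-- pointwise Gibbs inequality: for `x ≥ 0`, `c > 0`,
`x log c + (x - c) ≤ x log x`, strict unless `x = c`. -/
lemma pointwise_gibbs {x c : ℝ} (hx : 0 ≤ x) (hc : 0 < c) :
    x * Real.log c + (x - c) ≤ x * Real.log x ∧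
      (x ≠ c → x * Real.log c + (x - c) < x * Real.log x) := by
  rcases hx.eq_or_lt with h | h
  · constructor
    · rw [← h]; simp; linarith
    · intro _
      rw [← h]
      simp
      linarith
  · have hcx : 0 < c / x := div_pos hc h
    have hlog : Real.log (c / x) = Real.log c - Real.log x := Real.log_div hc.ne' h.ne'
    have h3 : x * (c / x) = c := by field_simp
    constructor
    · have h1 : Real.log (c / x) ≤ c / x - 1 := Real.log_le_sub_one_of_pos hcx
      have h2 := mul_le_mul_of_nonneg_left h1 h.le
      rw [hlog] at h2
      nlinarith [h2, h3]
    · intro hne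
      have hc1 : c / x ≠ 1 := by
        intro h1
        apply hne
        field_simp at h1
        linarith
      have h1 : Real.log (c / x) < c / x - 1 := Real.log_lt_sub_one_of_pos hcx hc1
      have h2 := mul_lt_mul_of_pos_left h1 h
      rw [hlog] at h2
      nlinarith [h2, h3]

/-- finite Gibbs / Jensen inequality with equality condition. -/
lemma gibbs_aux {σ : Type*} [Fintype σ] (w x : σ → ℝ) (hw : ∀ s, 0 ≤ w s)
    (hx : ∀ s, 0 < w s → 0 ≤ x s) :
    0 ≤ ∑ s, w s * (x s * Real.log (x s)) -
        (∑ s, w s * x s) * Real.log ((∑ s, w s * x s) / (∑ s, w s)) ∧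
      (∑ s, w s * (x s * Real.log (x s)) -
        (∑ s, w s * x s) * Real.log ((∑ s, w s * x s) / (∑ s, w s)) = 0 →
        ∀ s t, 0 < w s → 0 < w t → x s = x t) := by
  set p := ∑ s, w s * x s with hp
  set V := ∑ s, w s with hV
  have hterm : ∀ s ∈ Finset.univ, 0 ≤ w s * x s := by
    intro s _
    rcases (hw s).eq_or_lt with h | h
    · rw [← h]; simp
    · exact mul_nonneg (hw s) (hx s h)
  have hp0 : 0 ≤ p := Finset.sum_nonneg hterm
  rcases hp0.eq_or_lt with hp0' | hp0'
  · -- p = 0 case: all w s * x s = 0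
    have hall : ∀ s, w s * x s = 0 := by
      intro s
      have := (Finset.sum_eq_zero_iff_of_nonneg hterm).mp hp0'.symm
      exact this s (Finset.mem_univ s)
    have hx0 : ∀ s, 0 < w s → x s = 0 := by
      intro s hs
      have := hall s
      rcases mul_eq_zero.mp this with h | h
      · exact absurd h hs.ne'
      · exact h
    have hsum0 : ∑ s, w s * (x s * Real.log (x s)) = 0 := by
      apply Finset.sum_eq_zero
      intro s _
      rcases (hw s).eq_or_lt with h | h
      · rw [← h]; ring
      · rw [hx0 s h]; simp
    constructor
    · rw [hsum0, ← hp0']; simp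
    · intro _ s t hs ht
      rw [hx0 s hs, hx0 t ht]
  · -- p > 0 case
    have hV0 : 0 < V := by
      rcases (Finset.sum_nonneg (fun s _ => hw s) : (0:ℝ) ≤ V).eq_or_lt with h | h
      · exfalso
        have : ∀ s, w s = 0 := by
          intro s
          exact (Finset.sum_eq_zero_iff_of_nonneg (fun s _ => hw s)).mp h.symm s
            (Finset.mem_univ s)
        have : p = 0 := Finset.sum_eq_zero fun s _ => by rw [this s, zero_mul]
        exact hp0'.ne' this
      · exact h
    set c := p / V with hc
    have hc0 : 0 < c := div_pos hp0' hV0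
    set g := fun s => w s * (x s * Real.log (x s)) -
        (w s * x s * Real.log c + (w s * x s - w s * c)) with hg
    have hg0 : ∀ s, 0 ≤ g s := by
      intro s
      rcases (hw s).eq_or_lt with h | h
      · simp [hg, ← h]
      · have := (pointwise_gibbs (hx s h) hc0).1
        have := mul_le_mul_of_nonneg_left this h.le
        simp only [hg]
        nlinarith [this]
    have hgs : ∀ s, 0 < w s → x s ≠ c → 0 < g s := by
      intro s h hne
      have := (pointwise_gibbs (hx s h) hc0).2 hne
      have := mul_lt_mul_of_pos_left this h
      simp only [hg]
      nlinarith [this]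
    have hVc : V * c = p := by
      rw [hc]; field_simp
    have hsumg : ∑ s, g s = ∑ s, w s * (x s * Real.log (x s)) - p * Real.log c := by
      simp only [hg, Finset.sum_sub_distrib, Finset.sum_add_distrib]
      rw [← Finset.sum_mul, ← hp, ← Finset.sum_mul, ← hV, hVc]
      ring
    constructor
    · have hgg : (0:ℝ) ≤ ∑ s, g s :=
        Finset.sum_nonneg (fun s (_ : s ∈ (Finset.univ : Finset σ)) => hg0 s)
      rw [hsumg] at hgg
      linarith [hgg]
    · intro heq0 s t hs ht
      have hsum0 : ∑ s, g s = 0 := by rw [hsumg]; linarith [heq0]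
      have hall : ∀ s, g s = 0 := fun s =>
        (Finset.sum_eq_zero_iff_of_nonneg (fun s _ => hg0 s)).mp hsum0 s (Finset.mem_univ s)
      have h1 : x s = c := by
        by_contra hne
        exact (hgs s hs hne).ne' (hall s)
      have h2 : x t = c := by
        by_contra hne
        exact (hgs t ht hne).ne' (hall t)
      rw [h1, h2]

/-- trace of `Mᴴ * M` is zero iff `M = 0`. -/
lemma trace_conjTranspose_mul_self_eq_zero' {m n : Type*} [Fintype m] [Fintype n]
    {M : Matrix m n ℂ} (h : (Mᴴ * M).trace = 0) : M = 0 := by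
  have hdiag : ∀ i, (Mᴴ * M) i i = dotProduct (star fun j => M j i) (fun j => M j i) := by
    intro i
    simp [Matrix.mul_apply, dotProduct, Matrix.conjTranspose_apply]
  have hnn : ∀ i ∈ Finset.univ, (0:ℂ) ≤ (Mᴴ * M) i i := by
    intro i _
    rw [hdiag i]
    exact dotProduct_star_self_nonneg _
  have hz : ∀ i ∈ Finset.univ, (Mᴴ * M) i i = 0 :=
    (Finset.sum_eq_zero_iff_of_nonneg hnn).mp h
  ext i j
  have := hz j (Finset.mem_univ j)
  rw [hdiag j] at this
  have := dotProduct_star_self_eq_zero.mp this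
  exact congrFun this i

open scoped MatrixOrder in
lemma posSemidef_iff_eq_transpose_mul_self' {n : Type*} [Fintype n] [DecidableEq n]
    {A : Matrix n n ℂ} : A.PosSemidef ↔ ∃ B : Matrix n n ℂ, A = Bᴴ * B := by
  constructor
  · intro hA
    obtain ⟨B, hB⟩ := CStarAlgebra.nonneg_iff_eq_star_mul_self.mp hA.nonneg
    exact ⟨B, hB⟩
  · rintro ⟨B, rfl⟩
    exact Matrix.posSemidef_conjTranspose_mul_self B

/-- trace of a PSD matrix is nonneg (in the complex order). -/
lemma trace_nonneg_psd {n : Type*} [Fintype n] [DecidableEq n]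
    {A : Matrix n n ℂ} (hA : A.PosSemidef) : 0 ≤ A.trace := by
  apply Finset.sum_nonneg
  intro i _
  have := hA.dotProduct_mulVec_nonneg (Pi.single i 1)
  simpa [dotProduct, Matrix.mulVec_single, Pi.single_apply, Finset.mul_sum] using this

/-- trace of PSD is zero implies it's zero -/
lemma psd_trace_zero {n : Type*} [Fintype n] [DecidableEq n]
    {A : Matrix n n ℂ} (hA : A.PosSemidef) (h : A.trace = 0) : A = 0 := by
  obtain ⟨C, hC⟩ := posSemidef_iff_eq_transpose_mul_self'.mp hA
  rw [hC] at h
  rw [hC, trace_conjTranspose_mul_self_eq_zero' h]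
  simp

/-- trace of product of PSD matrices is nonneg -/
lemma trace_mul_nonneg_psd {n : Type*} [Fintype n] [DecidableEq n]
    {A B : Matrix n n ℂ} (hA : A.PosSemidef) (hB : B.PosSemidef) :
    0 ≤ (A * B).trace := by
  obtain ⟨C, hC⟩ := posSemidef_iff_eq_transpose_mul_self'.mp hB
  rw [hC, ← Matrix.mul_assoc, Matrix.trace_mul_comm, ← Matrix.mul_assoc]
  exact trace_nonneg_psd (hA.mul_mul_conjTranspose_same C)

lemma trace_real_of_nonneg {z : ℂ} (h : 0 ≤ z) : z = (z.re : ℂ) :=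
  Complex.eq_re_of_ofReal_le (by exact_mod_cast h)

/-- if `Q` is PSD, `P` a hermitian projection, and `tr (Q * P) = 0`, then `Q * P = 0`. -/
lemma mul_eq_zero_of_trace_zero {n : Type*} [Fintype n] [DecidableEq n]
    {Q P : Matrix n n ℂ} (hQ : Q.PosSemidef) (hP : P.IsHermitian) (hPP : P * P = P)
    (h : (Q * P).trace = 0) : Q * P = 0 := by
  obtain ⟨D, hD⟩ := posSemidef_iff_eq_transpose_mul_self'.mp hQ
  have key : ((D * P)ᴴ * (D * P)).trace = 0 := by
    have h1 : (D * P)ᴴ * (D * P) = Pᴴ * (Dᴴ * D * P) := by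
      simp only [Matrix.conjTranspose_mul, Matrix.mul_assoc]
    rw [h1, hP, Matrix.trace_mul_comm, Matrix.mul_assoc, Matrix.mul_assoc, hPP,
      ← Matrix.mul_assoc, ← hD]
    exact h
  have hDP : D * P = 0 := trace_conjTranspose_mul_self_eq_zero' key
  rw [hD, Matrix.mul_assoc, hDP, Matrix.mul_zero]

/-- Converse: if observational entropy of a POVM `{Q i}` equals the von Neumann entropy,
then each eigenprojector of `ρ` is the sum of the POVM elements over a block of a
partition of the index set (the partition is given by a function `f` assigning to each
index its eigenvalue label). -/
theorem refinement_of_obs_entropy_eq_vN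
    {n ι σ : Type*} [Fintype n] [DecidableEq n] [Fintype ι] [Fintype σ] [DecidableEq σ]
    (ρ : Matrix n n ℂ) (hρ : ρ.PosSemidef) (hρ1 : ρ.trace = 1)
    (e : σ → ℝ) (he : Function.Injective e)
    (P : σ → Matrix n n ℂ)
    (hherm : ∀ s, (P s).IsHermitian)
    (hproj : ∀ s, P s * P s = P s)
    (horth : ∀ s t, s ≠ t → P s * P t = 0)
    (hcomp : ∑ s, P s = 1)
    (hspec : ρ = ∑ s, (e s : ℂ) • P s)
    (Q : ι → Matrix n n ℂ) (hQ : ∀ i, (Q i).PosSemidef) (hQsum : ∑ i, Q i = 1)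
    (heq : -∑ i, (Q i * ρ).trace.re * Real.log ((Q i * ρ).trace.re / (Q i).trace.re)
      = -∑ s, (P s).trace.re * (e s * Real.log (e s))) :
    ∃ f : ι → σ, ∀ s, P s = ∑ i ∈ Finset.univ.filter (f · = s), Q i := by
  classical
  -- `P s` is PSD
  have hPpsd : ∀ s, (P s).PosSemidef := by
    intro s
    have h1 : P s = (P s)ᴴ * P s := by
      conv_lhs => rw [← hproj s]
      rw [hherm s]
    rw [h1]
    exact Matrix.posSemidef_conjTranspose_mul_self _
  -- nonempty n, σ
  have hn : Nonempty n := by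
    by_contra h
    rw [not_nonempty_iff] at h
    have : ρ.trace = 0 := by simp [Matrix.trace]
    rw [this] at hρ1
    exact one_ne_zero hρ1.symm
  have hσ : Nonempty σ := by
    by_contra h
    rw [not_nonempty_iff] at h
    have h0 : (0 : Matrix n n ℂ) = 1 := by rw [← hcomp]; simp
    obtain ⟨x⟩ := hn
    have := congrFun (congrFun h0 x) x
    simp [Matrix.one_apply_eq] at this
  -- the overlap weights
  set q : ι → σ → ℝ := fun i s => ((Q i * P s).trace).re with hqdef
  have htrR : ∀ i s, (Q i * P s).trace = ((q i s : ℝ) : ℂ) := by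
    intro i s
    exact trace_real_of_nonneg (trace_mul_nonneg_psd (hQ i) (hPpsd s))
  have hq0 : ∀ i s, 0 ≤ q i s := by
    intro i s
    have := trace_mul_nonneg_psd (hQ i) (hPpsd s)
    rw [Complex.nonneg_iff] at this
    exact this.1
  -- trace identities
  have hQtr : ∀ i, (Q i).trace.re = ∑ s, q i s := by
    intro i
    have h1 : (Q i).trace = ∑ s, (Q i * P s).trace := by
      rw [← Matrix.trace_sum, ← Finset.mul_sum, hcomp, Matrix.mul_one]
    rw [h1, Complex.re_sum]
  have hPtr : ∀ s, (P s).trace.re = ∑ i, q i s := by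
    intro s
    have h1 : (P s).trace = ∑ i, (Q i * P s).trace := by
      rw [← Matrix.trace_sum, ← Finset.sum_mul, hQsum, Matrix.one_mul]
    rw [h1, Complex.re_sum]
  have hρtr : ∀ i, (Q i * ρ).trace.re = ∑ s, q i s * e s := by
    intro i
    have h1 : Q i * ρ = ∑ s, (e s : ℂ) • (Q i * P s) := by
      rw [hspec, Finset.mul_sum]
      congr 1
      ext s
      rw [Matrix.mul_smul]
    rw [h1, Matrix.trace_sum]
    rw [Complex.re_sum]
    congr 1
    ext s
    rw [Matrix.trace_smul, smul_eq_mul, htrR, ← Complex.ofReal_mul]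
    rw [Complex.ofReal_re]
    ring
  -- nonzero Q i has positive trace
  have hQpos : ∀ i, Q i ≠ 0 → 0 < (Q i).trace.re := by
    intro i hne
    rcases ((Complex.nonneg_iff.mp (trace_nonneg_psd (hQ i))).1).eq_or_lt with h | h
    · exfalso
      apply hne
      apply psd_trace_zero (hQ i)
      rw [trace_real_of_nonneg (trace_nonneg_psd (hQ i)), ← h]
      simp
    · exact h
  have hPpos : ∀ s, P s ≠ 0 → 0 < (P s).trace.re := by
    intro s hne
    rcases ((Complex.nonneg_iff.mp (trace_nonneg_psd (hPpsd s))).1).eq_or_lt with h | h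
    · exfalso
      apply hne
      apply psd_trace_zero (hPpsd s)
      rw [trace_real_of_nonneg (trace_nonneg_psd (hPpsd s)), ← h]
      simp
    · exact h
  -- eigenvalues are nonneg where the projector is nonzero
  have hρP : ∀ s, ρ * P s = (e s : ℂ) • P s := by
    intro s
    rw [hspec, Finset.sum_mul]
    have h2 : ∑ t, (e t : ℂ) • P t * P s = (e s : ℂ) • P s * P s :=
      Finset.sum_eq_single s
        (fun t _ hts => by rw [Matrix.smul_mul, horth t s hts, smul_zero])
        (fun h => absurd (Finset.mem_univ s) h)
    rw [h2, Matrix.smul_mul, hproj s]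
  have he0 : ∀ s, P s ≠ 0 → 0 ≤ e s := by
    intro s hne
    have h1 : 0 ≤ (ρ * P s).trace := trace_mul_nonneg_psd hρ (hPpsd s)
    rw [hρP s, Matrix.trace_smul] at h1
    have h2 := (Complex.nonneg_iff.mp h1).1
    rw [smul_eq_mul] at h2
    have h3 : ((e s : ℂ) * (P s).trace).re = e s * (P s).trace.re := by
      rw [trace_real_of_nonneg (trace_nonneg_psd (hPpsd s)), ← Complex.ofReal_mul,
        Complex.ofReal_re, Complex.ofReal_re]
    rw [h3] at h2
    have := hPpos s hne
    by_contra hes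
    push_neg at hes
    nlinarith
  have hqe : ∀ i s, 0 < q i s → 0 ≤ e s := by
    intro i s hpos
    apply he0
    intro h0
    rw [hqdef] at hpos
    simp only [h0, Matrix.mul_zero, Matrix.trace_zero, Complex.zero_re] at hpos
    exact lt_irrefl 0 hpos
  -- Gibbs inequality terms
  set D : ι → ℝ := fun i => ∑ s, q i s * (e s * Real.log (e s)) -
      (∑ s, q i s * e s) * Real.log ((∑ s, q i s * e s) / (∑ s, q i s)) with hD
  have hD0 : ∀ i, 0 ≤ D i := fun i =>
    (gibbs_aux (q i) e (hq0 i) (hqe i)).1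
  -- the sum of D is zero
  have hsumD : ∑ i, D i = 0 := by
    have hLHS : ∀ i, (Q i * ρ).trace.re * Real.log ((Q i * ρ).trace.re / (Q i).trace.re)
        = (∑ s, q i s * e s) * Real.log ((∑ s, q i s * e s) / (∑ s, q i s)) := by
      intro i
      rw [hρtr i, hQtr i]
    have hRHS : ∑ s, (P s).trace.re * (e s * Real.log (e s))
        = ∑ i, ∑ s, q i s * (e s * Real.log (e s)) := by
      rw [Finset.sum_comm]
      congr 1
      ext s
      rw [hPtr s, Finset.sum_mul]
    simp only [hD, Finset.sum_sub_distrib]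
    rw [← hRHS]
    have := heq
    simp only [neg_inj] at this
    rw [← this]
    rw [Finset.sum_congr rfl (fun i _ => (hLHS i).symm)]
    ring
  have hDz : ∀ i, D i = 0 := fun i =>
    (Finset.sum_eq_zero_iff_of_nonneg (fun i _ => hD0 i)).mp hsumD i (Finset.mem_univ i)
  -- constancy on the support
  have hconst : ∀ i s t, 0 < q i s → 0 < q i t → s = t := by
    intro i s t hs ht
    have := (gibbs_aux (q i) e (hq0 i) (hqe i)).2 (hDz i) s t hs ht
    exact he this
  -- define f
  set f : ι → σ := fun i => if h : ∃ s, 0 < q i s then h.choose else Classical.arbitrary σ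
    with hf
  have hfq : ∀ i s, s ≠ f i → q i s = 0 := by
    intro i s hs
    by_contra hqs
    have hpos : 0 < q i s := (hq0 i s).lt_of_ne (Ne.symm hqs)
    have hex : ∃ s, 0 < q i s := ⟨s, hpos⟩
    have hfi : f i = hex.choose := by rw [hf]; simp [dif_pos hex]
    have := hconst i s hex.choose hpos hex.choose_spec
    rw [← hfi] at this
    exact hs this
  -- trace zero forces product zero
  have hQP : ∀ i s, s ≠ f i → Q i * P s = 0 := by
    intro i s hs
    apply mul_eq_zero_of_trace_zero (hQ i) (hherm s) (hproj s)
    rw [htrR i s, hfq i s hs]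
    simp
  have hPQ : ∀ i s, s ≠ f i → P s * Q i = 0 := by
    intro i s hs
    have h1 := congrArg Matrix.conjTranspose (hQP i s hs)
    rw [Matrix.conjTranspose_mul, (hherm s), (hQ i).isHermitian] at h1
    simpa using h1
  -- each Q i with f i = s is absorbed by P s
  have habs : ∀ i, P (f i) * Q i = Q i := by
    intro i
    have h1 : Q i = ∑ t, P t * Q i := by
      rw [← Finset.sum_mul, hcomp, Matrix.one_mul]
    have h2 : ∑ t, P t * Q i = P (f i) * Q i :=
      Finset.sum_eq_single (f i) (fun t _ hts => hPQ i t hts)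
        (fun h => absurd (Finset.mem_univ (f i)) h)
    rw [← h2, ← h1]
  refine ⟨f, fun s => ?_⟩
  have h1 : P s = ∑ i, P s * Q i := by
    rw [← Finset.mul_sum, hQsum, Matrix.mul_one]
  rw [h1, ← Finset.sum_filter_add_sum_filter_not Finset.univ (fun i => f i = s)]
  have h2 : ∑ i ∈ Finset.univ.filter (fun i => ¬ f i = s), P s * Q i = 0 := by
    apply Finset.sum_eq_zero
    intro i hi
    rw [Finset.mem_filter] at hi
    exact hPQ i s (fun h => hi.2 h.symm)
  rw [h2, add_zero]
  apply Finset.sum_congr rfl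
  intro i hi
  rw [Finset.mem_filter] at hi
  rw [← hi.2, habs i]
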